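/- Let |0⟩, |1⟩ be the computational basis of ℂ² and |0̄⟩ = (|0⟩+|1⟩)/√2, |1̄⟩ = (|0⟩−|1⟩)/√2 the diagonal basis. There exists no density matrix σ on ℂ² ⊗ ℂ² ⊗ ℂ² (factors labelled R_A, R_B, S) such that the partial trace over R_B equals (1/2)(|0⟩⟨0|_{R_A} ⊗ |0⟩⟨0|_S + |1⟩⟨1|_{R_A} ⊗ |1⟩⟨1|_S) and the partial trace over R_A equals (1/2)(|0⟩⟨0|_{R_B} ⊗ |0̄⟩⟨0̄|_S + |1⟩⟨1|_{R_B} ⊗ |1̄⟩⟨1̄|_S). -/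

import Mathlib

open Matrix BigOperators Kronecker
open scoped ComplexOrder

/-- A density matrix: positive semidefinite with trace one. -/
def IsDensity {n : Type*} [Fintype n] [DecidableEq n] (ρ : Matrix n n ℂ) : Prop :=
  ρ.PosSemidef ∧ ρ.trace = 1

/-- The computational basis vectors `|0⟩, |1⟩` of `ℂ²`. -/
def ket (r : Fin 2) : Fin 2 → ℂ := fun i => if i = r then 1 else 0

/-- The diagonal basis vectors `|0̄⟩ = (|0⟩+|1⟩)/√2` and `|1̄⟩ = (|0⟩−|1⟩)/√2`. -/
noncomputable def ketbar (r : Fin 2) : Fin 2 → ℂ :=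
  fun i => ((Real.sqrt 2)⁻¹ : ℂ) * (if i = 0 then 1 else if r = 0 then 1 else -1)

/-- The rank-one projector `|v⟩⟨v|`. -/
def proj {n : Type*} [Fintype n] (v : n → ℂ) : Matrix n n ℂ :=
  Matrix.vecMulVec v (star v)

/-- Partial trace over the middle factor `R_B` of a tripartite state on `R_A ⊗ R_B ⊗ S`. -/
noncomputable def ptraceRB (σ : Matrix (Fin 2 × Fin 2 × Fin 2) (Fin 2 × Fin 2 × Fin 2) ℂ) :
    Matrix (Fin 2 × Fin 2) (Fin 2 × Fin 2) ℂ :=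
  fun p q => ∑ k : Fin 2, σ (p.1, k, p.2) (q.1, k, q.2)

/-- Partial trace over the first factor `R_A` of a tripartite state on `R_A ⊗ R_B ⊗ S`. -/
noncomputable def ptraceRA (σ : Matrix (Fin 2 × Fin 2 × Fin 2) (Fin 2 × Fin 2 × Fin 2) ℂ) :
    Matrix (Fin 2 × Fin 2) (Fin 2 × Fin 2) ℂ :=
  fun p q => ∑ k : Fin 2, σ (k, p.1, p.2) (k, q.1, q.2)

lemma diag_nonneg' {n : Type*} [Fintype n] [DecidableEq n] {A : Matrix n n ℂ}
    (hA : A.PosSemidef) (i : n) : 0 ≤ A i i := by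
  exact hA.diag_nonneg

lemma col_row_zero {n : Type*} [Fintype n] [DecidableEq n] {A : Matrix n n ℂ}
    (hA : A.PosSemidef) {i : n} (h : A i i = 0) (j : n) : A j i = 0 ∧ A i j = 0 := by
  have hz : A *ᵥ Pi.single i 1 = 0 := by
    rw [← hA.dotProduct_mulVec_zero_iff]
    simpa [mulVec_single, ← Pi.single_star, single_dotProduct] using h
  have hcol : A j i = 0 := by
    have := congrFun hz j
    simpa [mulVec_single] using this
  refine ⟨hcol, ?_⟩
  have h2 := congrFun (congrFun hA.1 i) j
  rw [conjTranspose_apply] at h2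
  rw [← h2, hcol, star_zero]

lemma both_zero {a b : ℂ} (ha : 0 ≤ a) (hb : 0 ≤ b) (h : a + b = 0) : a = 0 ∧ b = 0 := by
  constructor
  · refine le_antisymm ?_ ha
    rw [eq_neg_of_add_eq_zero_left h]
    exact neg_nonpos.mpr hb
  · refine le_antisymm ?_ hb
    rw [eq_neg_of_add_eq_zero_right h]
    exact neg_nonpos.mpr ha

/-- Objective outcome paradox (Theorem 2): no tripartite state on `R_A ⊗ R_B ⊗ S` has both
the marginal `(1/2)(|0⟩⟨0|⊗|0⟩⟨0| + |1⟩⟨1|⊗|1⟩⟨1|)` on `R_A S` and the marginal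
`(1/2)(|0⟩⟨0|⊗|0̄⟩⟨0̄| + |1⟩⟨1|⊗|1̄⟩⟨1̄|)` on `R_B S`. -/
theorem no_joint_tripartite_state :
    ¬ ∃ σ : Matrix (Fin 2 × Fin 2 × Fin 2) (Fin 2 × Fin 2 × Fin 2) ℂ,
      IsDensity σ ∧
      ptraceRB σ =
        ((1 : ℂ) / 2) • (proj (ket 0) ⊗ₖ proj (ket 0) + proj (ket 1) ⊗ₖ proj (ket 1)) ∧
      ptraceRA σ =
        ((1 : ℂ) / 2) • (proj (ket 0) ⊗ₖ proj (ketbar 0) + proj (ket 1) ⊗ₖ proj (ketbar 1)) := by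
  rintro ⟨σ, ⟨hpsd, -⟩, h1, h2⟩
  have e01 := congrFun (congrFun h1 (0, 1)) (0, 1)
  have e10 := congrFun (congrFun h1 (1, 0)) (1, 0)
  simp [ptraceRB, proj, ket, vecMulVec_apply, Fin.sum_univ_two] at e01 e10
  obtain ⟨d001, -⟩ := both_zero (diag_nonneg' hpsd (0, 0, 1)) (diag_nonneg' hpsd (0, 1, 1)) e01
  obtain ⟨d100, -⟩ := both_zero (diag_nonneg' hpsd (1, 0, 0)) (diag_nonneg' hpsd (1, 1, 0)) e10
  have z1 : σ 0 (0, 0, 1) = 0 := (col_row_zero hpsd d001 0).1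
  have z2 : σ (1, 0) (1, 0, 1) = 0 := (col_row_zero hpsd d100 (1, 0, 1)).2
  have key := congrFun (congrFun h2 (0, 0)) (0, 1)
  simp [ptraceRA, proj, ket, ketbar, vecMulVec_apply, Fin.sum_univ_two, Prod.mk_zero_zero, z1, z2] at key
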